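/- arXiv:1409.6422 — 7 statements merged into one kernel-verified Lean document; each statement's English description precedes it below -/
import Mathlib

section
/- Let f be an orientation-preserving homeomorphism of the circle with lift F : ℝ → ℝ, and let μ be an f-invariant Borel probability measure on the circle. Then the translation number of F equals the integral over the circle of the displacement function x ↦ F(x̃) − x̃ (where x̃ is a lift of x; the displacement descends to a well-defined function on the circle). -/
open MeasureTheory Filter Topology

/-- For an orientation-preserving circle homeomorphism `f` with lift
`F : ℝ → ℝ` and an `f`-invariant Borel probability measure `μ` on the circle
`ℝ/ℤ = AddCircle 1`, the translation number `τ(F) = lim Fⁿ(0)/n` equals the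
integral over the circle of the displacement function `x ↦ F x̃ - x̃`. -/
theorem translation_number_eq_integral_displacement
    (F : ℝ → ℝ) (hFc : Continuous F) (hFm : StrictMono F)
    (hFsurj : Function.Surjective F)
    (hFper : ∀ x : ℝ, F (x + 1) = F x + 1)
    (f : AddCircle (1 : ℝ) → AddCircle (1 : ℝ))
    (hlift : ∀ x : ℝ, f (x : AddCircle (1 : ℝ)) = ((F x : ℝ) : AddCircle (1 : ℝ)))
    (μ : Measure (AddCircle (1 : ℝ))) [IsProbabilityMeasure μ]
    (hinv : Measure.map f μ = μ)
    (φ : AddCircle (1 : ℝ) → ℝ)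
    (hφ : ∀ x : ℝ, φ (x : AddCircle (1 : ℝ)) = F x - x) :
    Tendsto (fun n : ℕ => F^[n] 0 / (n : ℝ)) atTop (𝓝 (∫ x, φ x ∂μ)) := by
  set I := ∫ x, φ x ∂μ with hI
  -- basic iterate facts
  have hiter : ∀ (n : ℕ) (x : ℝ), f^[n] (x : AddCircle (1:ℝ)) = ((F^[n] x : ℝ) : AddCircle (1:ℝ)) := by
    intro n
    induction n with
    | zero => simp
    | succ n ih =>
      intro x
      rw [Function.iterate_succ_apply', Function.iterate_succ_apply', ih, hlift]
  have hpern : ∀ (n : ℕ) (x : ℝ), F^[n] (x + 1) = F^[n] x + 1 := by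
    intro n
    induction n with
    | zero => simp
    | succ n ih =>
      intro x
      rw [Function.iterate_succ_apply', Function.iterate_succ_apply', ih, hFper]
  have hmono : ∀ n : ℕ, Monotone (F^[n]) := fun n => (hFm.iterate n).monotone
  -- continuity
  have hφc : Continuous φ := by
    rw [isQuotientMap_quotient_mk'.continuous_iff]
    have : (φ ∘ fun x : ℝ => (x : AddCircle (1:ℝ))) = fun x : ℝ => F x - x := funext hφ
    exact this ▸ (hFc.sub continuous_id)
  have hfc : Continuous f := by
    rw [isQuotientMap_quotient_mk'.continuous_iff]
    have : (f ∘ fun x : ℝ => (x : AddCircle (1:ℝ))) = fun x : ℝ => ((F x : ℝ) : AddCircle (1:ℝ)) :=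
      funext hlift
    exact this ▸ (continuous_quotient_mk'.comp hFc)
  have hfkc : ∀ k : ℕ, Continuous (f^[k]) := fun k => hfc.iterate k
  -- invariance of μ under iterates
  have hinvn : ∀ n : ℕ, Measure.map (f^[n]) μ = μ := by
    intro n
    induction n with
    | zero => simp
    | succ n ih =>
      rw [Function.iterate_succ', ← Measure.map_map hfc.measurable (hfkc n).measurable, ih, hinv]
  have hintk : ∀ k : ℕ, Integrable (fun z => φ (f^[k] z)) μ :=
    fun k => (hφc.comp (hfkc k)).integrable_of_hasCompactSupport (HasCompactSupport.of_compactSpace _)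
  have hEk : ∀ k : ℕ, ∫ z, φ (f^[k] z) ∂μ = I := by
    intro k
    rw [hI]
    conv_rhs => rw [← hinvn k]
    rw [integral_map (hfkc k).measurable.aemeasurable hφc.aestronglyMeasurable]
  -- telescoping
  have htel : ∀ (n : ℕ) (x : ℝ),
      (∑ k ∈ Finset.range n, φ (f^[k] (x : AddCircle (1:ℝ)))) = F^[n] x - x := by
    intro n x
    induction n with
    | zero => simp
    | succ n ih =>
      rw [Finset.sum_range_succ, ih, hiter, hφ, Function.iterate_succ_apply']
      ring
  -- integral of partial sums
  have hsumint : ∀ n : ℕ, ∫ z, (∑ k ∈ Finset.range n, φ (f^[k] z)) ∂μ = n * I := by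
    intro n
    rw [integral_finset_sum _ (fun k _ => hintk k)]
    simp [hEk]
  have hsumintg : ∀ n : ℕ, Integrable (fun z => ∑ k ∈ Finset.range n, φ (f^[k] z)) μ :=
    fun n => integrable_finset_sum _ (fun k _ => hintk k)
  -- pointwise bound
  have hbound : ∀ (n : ℕ) (z : AddCircle (1:ℝ)),
      |(∑ k ∈ Finset.range n, φ (f^[k] z)) - F^[n] 0| ≤ 1 := by
    intro n z
    obtain ⟨y, ⟨hy0, hy1⟩, rfl⟩ : ∃ y : ℝ, y ∈ Set.Ico (0:ℝ) 1 ∧ (y : AddCircle (1:ℝ)) = z := by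
      obtain ⟨y, rfl⟩ := QuotientAddGroup.mk_surjective z
      refine ⟨Int.fract y, ⟨Int.fract_nonneg y, Int.fract_lt_one y⟩, ?_⟩
      rw [QuotientAddGroup.eq]
      refine ⟨⌊y⌋, ?_⟩
      show (⌊y⌋ : ℤ) • (1:ℝ) = -Int.fract y + y
      rw [zsmul_eq_mul, mul_one, Int.fract]; ring
    rw [htel]
    have h1 : F^[n] 0 ≤ F^[n] y := hmono n hy0
    have h2 : F^[n] y ≤ F^[n] 0 + 1 := by
      have ha := hmono n hy1.le
      have hb := hpern n 0
      rw [zero_add] at hb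
      linarith
    rw [abs_le]
    constructor <;> linarith
  -- integral bound
  have key : ∀ n : ℕ, |(n : ℝ) * I - F^[n] 0| ≤ 1 := by
    intro n
    have := norm_integral_le_of_norm_le_const (μ := μ)
      (f := fun z => (∑ k ∈ Finset.range n, φ (f^[k] z)) - F^[n] 0) (C := 1)
      (Eventually.of_forall fun z => by simpa using hbound n z)
    rw [integral_sub (hsumintg n) (integrable_const _), hsumint, integral_const] at this
    simpa using this
  -- conclusion
  have h0 : Tendsto (fun n : ℕ => (F^[n] 0 - (n:ℝ) * I) / n) atTop (𝓝 0) := by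
    apply squeeze_zero_norm' (a := fun n : ℕ => 1 / (n : ℝ))
    · filter_upwards [eventually_ge_atTop 1] with n hn
      have hn' : (0:ℝ) < n := by exact_mod_cast hn
      have hk := key n
      rw [abs_sub_comm] at hk
      rw [norm_div, Real.norm_natCast]
      gcongr
      exact hk
    · exact tendsto_one_div_atTop_nhds_zero_nat
  have h1 : Tendsto (fun n : ℕ => (F^[n] 0 - (n:ℝ) * I) / n + I) atTop (𝓝 I) := by
    simpa using h0.add_const I
  apply h1.congr'
  filter_upwards [eventually_ge_atTop 1] with n hn
  have hn' : (0:ℝ) < n := by exact_mod_cast hn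
  field_simp
  ring
end

section
/- Let μ be a Borel probability measure on the circle, and let F, G : ℝ → ℝ be lifts of orientation-preserving circle homeomorphisms f, g both of which preserve μ. Then the translation number of the composition F ∘ G equals τ(F) + τ(G); that is, translation number is a group homomorphism on the group of lifts of μ-preserving orientation-preserving circle homeomorphisms. -/
open MeasureTheory Filter Topology

private lemma key_translation_lemma
    (F : ℝ → ℝ) (hFm : Monotone F)
    (hFper : ∀ x : ℝ, F (x + 1) = F x + 1)
    (f : AddCircle (1 : ℝ) → AddCircle (1 : ℝ)) (hfc : Continuous f)
    (hliftF : ∀ x : ℝ, f (x : AddCircle (1 : ℝ)) = ((F x : ℝ) : AddCircle (1 : ℝ)))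
    (μ : Measure (AddCircle (1 : ℝ))) [IsProbabilityMeasure μ]
    (hinvf : Measure.map f μ = μ)
    (φ : AddCircle (1 : ℝ) → ℝ) (hφc : Continuous φ)
    (hφ : ∀ x : ℝ, φ (x : AddCircle (1 : ℝ)) = F x - x) :
    Tendsto (fun n : ℕ => F^[n] 0 / (n : ℝ)) atTop (𝓝 (∫ y, φ y ∂μ)) := by
  set I := ∫ y, φ y ∂μ with hI
  -- iterated lifts
  have hiterlift : ∀ (n : ℕ) (x : ℝ),
      f^[n] (x : AddCircle (1 : ℝ)) = ((F^[n] x : ℝ) : AddCircle (1 : ℝ)) := by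
    intro n
    induction n with
    | zero => intro x; simp
    | succ n ih =>
      intro x
      rw [Function.iterate_succ_apply', Function.iterate_succ_apply', ih, hliftF]
  have hiterper : ∀ (n : ℕ) (x : ℝ), F^[n] (x + 1) = F^[n] x + 1 := by
    intro n
    induction n with
    | zero => intro x; simp
    | succ n ih =>
      intro x
      rw [Function.iterate_succ_apply', Function.iterate_succ_apply', ih, hFper]
  have hsum : ∀ (n : ℕ) (x : ℝ),
      (∑ k ∈ Finset.range n, φ (f^[k] (x : AddCircle (1 : ℝ)))) = F^[n] x - x := by
    intro n x
    induction n with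
    | zero => simp
    | succ n ih =>
      rw [Finset.sum_range_succ, ih, hiterlift, hφ, Function.iterate_succ_apply']
      ring
  have hmono_iter : ∀ n : ℕ, Monotone (F^[n]) := fun n => hFm.iterate n
  have hfiterc : ∀ k : ℕ, Continuous (f^[k]) := fun k => hfc.iterate k
  have hmapiter : ∀ k : ℕ, Measure.map (f^[k]) μ = μ := by
    intro k
    induction k with
    | zero => simp [Measure.map_id]
    | succ k ih =>
      rw [Function.iterate_succ']
      rw [← Measure.map_map hfc.measurable (hfiterc k).measurable, ih, hinvf]
  have hint : ∀ k : ℕ, Integrable (fun y => φ (f^[k] y)) μ := fun k =>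
    (hφc.comp (hfiterc k)).integrable_of_hasCompactSupport
      (isClosed_tsupport _).isCompact
  have hcompint : ∀ k : ℕ, (∫ y, φ (f^[k] y) ∂μ) = I := by
    intro k
    calc (∫ y, φ (f^[k] y) ∂μ)
        = ∫ y, φ y ∂(Measure.map (f^[k]) μ) :=
          (integral_map (hfiterc k).measurable.aemeasurable
            hφc.aestronglyMeasurable).symm
      _ = I := by rw [hmapiter k]
  have hintsum : ∀ n : ℕ,
      (∫ y, (∑ k ∈ Finset.range n, φ (f^[k] y)) ∂μ) = (n : ℝ) * I := by
    intro n
    rw [integral_finset_sum _ fun k _ => hint k]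
    simp [hcompint]
  -- uniform bound
  have hbound : ∀ (n : ℕ) (y : AddCircle (1 : ℝ)),
      |(∑ k ∈ Finset.range n, φ (f^[k] y)) - F^[n] 0| ≤ 1 := by
    intro n y
    obtain ⟨x, rfl⟩ := QuotientAddGroup.mk_surjective y
    have hx0 : ((Int.fract x : ℝ) : AddCircle (1 : ℝ)) = QuotientAddGroup.mk x := by
      rw [QuotientAddGroup.eq]
      have h : -Int.fract x + x = (⌊x⌋ : ℤ) • (1 : ℝ) := by
        rw [zsmul_eq_mul, mul_one, Int.fract]
        ring
      rw [h]
      exact AddSubgroup.zsmul_mem_zmultiples _ _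
    have hy : (QuotientAddGroup.mk x : AddCircle (1 : ℝ))
        = ((Int.fract x : ℝ) : AddCircle (1 : ℝ)) := hx0.symm
    rw [hy, hsum n (Int.fract x)]
    have h0 : F^[n] 0 ≤ F^[n] (Int.fract x) := hmono_iter n (Int.fract_nonneg x)
    have h1 : F^[n] (Int.fract x) ≤ F^[n] 0 + 1 := by
      have h2 : F^[n] (Int.fract x) ≤ F^[n] 1 :=
        hmono_iter n (le_of_lt (Int.fract_lt_one x))
      have h3 : F^[n] (1 : ℝ) = F^[n] 0 + 1 := by
        have := hiterper n 0
        simpa using this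
      linarith
    have hf0 := Int.fract_nonneg x
    have hf1 := Int.fract_lt_one x
    rw [abs_le]
    constructor <;> linarith
  have hdist : ∀ n : ℕ, |F^[n] 0 - (n : ℝ) * I| ≤ 1 := by
    intro n
    have h1 : ‖∫ y, ((∑ k ∈ Finset.range n, φ (f^[k] y)) - F^[n] 0) ∂μ‖
        ≤ 1 * (μ Set.univ).toReal := by
      refine norm_integral_le_of_norm_le_const ?_
      filter_upwards with y
      rw [Real.norm_eq_abs]
      exact hbound n y
    rw [integral_sub (integrable_finset_sum _ fun k _ => hint k)
      (integrable_const _), hintsum n, integral_const] at h1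
    simp [Real.norm_eq_abs] at h1
    rw [abs_sub_comm] at h1
    convert h1 using 2
  -- conclude
  rw [tendsto_iff_dist_tendsto_zero]
  have hle : ∀ᶠ n : ℕ in atTop, dist (F^[n] 0 / (n : ℝ)) I ≤ 1 / (n : ℝ) := by
    filter_upwards [eventually_ge_atTop 1] with n hn
    have hn' : (0 : ℝ) < n := by exact_mod_cast Nat.lt_of_lt_of_le Nat.zero_lt_one hn
    rw [Real.dist_eq]
    have heq : F^[n] 0 / (n : ℝ) - I = (F^[n] 0 - (n : ℝ) * I) / n := by
      field_simp
    rw [heq, abs_div, abs_of_pos hn']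
    gcongr
    exact hdist n
  refine squeeze_zero' (Eventually.of_forall fun n => dist_nonneg) hle ?_
  exact tendsto_one_div_atTop_nhds_zero_nat

/-- If `F, G : ℝ → ℝ` are lifts of orientation-preserving circle
homeomorphisms `f, g` that both preserve a Borel probability measure `μ` on the
circle, then the translation number of `F ∘ G` equals `τ(F) + τ(G)`. -/
theorem translation_number_add_of_measure_preserving
    (F G : ℝ → ℝ)
    (hFc : Continuous F) (hFm : StrictMono F) (hFsurj : Function.Surjective F)
    (hFper : ∀ x : ℝ, F (x + 1) = F x + 1)
    (hGc : Continuous G) (hGm : StrictMono G) (hGsurj : Function.Surjective G)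
    (hGper : ∀ x : ℝ, G (x + 1) = G x + 1)
    (f g : AddCircle (1 : ℝ) → AddCircle (1 : ℝ))
    (hliftF : ∀ x : ℝ, f (x : AddCircle (1 : ℝ)) = ((F x : ℝ) : AddCircle (1 : ℝ)))
    (hliftG : ∀ x : ℝ, g (x : AddCircle (1 : ℝ)) = ((G x : ℝ) : AddCircle (1 : ℝ)))
    (μ : Measure (AddCircle (1 : ℝ))) [IsProbabilityMeasure μ]
    (hinvf : Measure.map f μ = μ) (hinvg : Measure.map g μ = μ)
    (τF τG : ℝ)
    (hτF : Tendsto (fun n : ℕ => F^[n] 0 / (n : ℝ)) atTop (𝓝 τF))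
    (hτG : Tendsto (fun n : ℕ => G^[n] 0 / (n : ℝ)) atTop (𝓝 τG)) :
    Tendsto (fun n : ℕ => (F ∘ G)^[n] 0 / (n : ℝ)) atTop (𝓝 (τF + τG)) := by
  -- continuity of f and g
  have hfc : Continuous f := by
    rw [(QuotientAddGroup.isQuotientMap_mk _).continuous_iff]
    have : (f ∘ (QuotientAddGroup.mk : ℝ → AddCircle (1 : ℝ)))
        = fun x : ℝ => ((F x : ℝ) : AddCircle (1 : ℝ)) := funext hliftF
    rw [this]
    exact continuous_quot_mk.comp hFc
  have hgc : Continuous g := by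
    rw [(QuotientAddGroup.isQuotientMap_mk _).continuous_iff]
    have : (g ∘ (QuotientAddGroup.mk : ℝ → AddCircle (1 : ℝ)))
        = fun x : ℝ => ((G x : ℝ) : AddCircle (1 : ℝ)) := funext hliftG
    rw [this]
    exact continuous_quot_mk.comp hGc
  -- displacement functions
  have hFdp : Function.Periodic (fun x : ℝ => F x - x) 1 := by
    intro x; simp [hFper x]
  have hGdp : Function.Periodic (fun x : ℝ => G x - x) 1 := by
    intro x; simp [hGper x]
  set φF : AddCircle (1 : ℝ) → ℝ := hFdp.lift with hφFdef
  set φG : AddCircle (1 : ℝ) → ℝ := hGdp.lift with hφGdef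
  have hφF : ∀ x : ℝ, φF (x : AddCircle (1 : ℝ)) = F x - x := fun x => hFdp.lift_coe x
  have hφG : ∀ x : ℝ, φG (x : AddCircle (1 : ℝ)) = G x - x := fun x => hGdp.lift_coe x
  have hφFc : Continuous φF := by
    rw [(QuotientAddGroup.isQuotientMap_mk _).continuous_iff]
    have : (φF ∘ (QuotientAddGroup.mk : ℝ → AddCircle (1 : ℝ)))
        = fun x : ℝ => F x - x := funext hφF
    rw [this]
    exact hFc.sub continuous_id
  have hφGc : Continuous φG := by
    rw [(QuotientAddGroup.isQuotientMap_mk _).continuous_iff]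
    have : (φG ∘ (QuotientAddGroup.mk : ℝ → AddCircle (1 : ℝ)))
        = fun x : ℝ => G x - x := funext hφG
    rw [this]
    exact hGc.sub continuous_id
  -- identify τF and τG with the integrals
  have hFlim := key_translation_lemma F hFm.monotone hFper f hfc hliftF μ hinvf φF hφFc hφF
  have hGlim := key_translation_lemma G hGm.monotone hGper g hgc hliftG μ hinvg φG hφGc hφG
  have hτFeq : τF = ∫ y, φF y ∂μ := tendsto_nhds_unique hτF hFlim
  have hτGeq : τG = ∫ y, φG y ∂μ := tendsto_nhds_unique hτG hGlim
  -- apply the key lemma to F ∘ G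
  have hFGm : Monotone (F ∘ G) := (hFm.comp hGm).monotone
  have hFGper : ∀ x : ℝ, (F ∘ G) (x + 1) = (F ∘ G) x + 1 := by
    intro x; simp [Function.comp, hGper x, hFper (G x)]
  have hfgc : Continuous (f ∘ g) := hfc.comp hgc
  have hliftFG : ∀ x : ℝ, (f ∘ g) (x : AddCircle (1 : ℝ))
      = (((F ∘ G) x : ℝ) : AddCircle (1 : ℝ)) := by
    intro x; simp [Function.comp, hliftG x, hliftF (G x)]
  have hinvfg : Measure.map (f ∘ g) μ = μ := by
    rw [← Measure.map_map hfc.measurable hgc.measurable, hinvg, hinvf]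
  set φFG : AddCircle (1 : ℝ) → ℝ := fun y => φF (g y) + φG y with hφFGdef
  have hφFG : ∀ x : ℝ, φFG (x : AddCircle (1 : ℝ)) = (F ∘ G) x - x := by
    intro x
    simp only [hφFGdef, hliftG x, hφF (G x), hφG x, Function.comp]
    ring
  have hφFGc : Continuous φFG := (hφFc.comp hgc).add hφGc
  have hFGlim := key_translation_lemma (F ∘ G) hFGm hFGper (f ∘ g) hfgc hliftFG μ
    hinvfg φFG hφFGc hφFG
  -- compute the integral of φFG
  have hintF : Integrable φF μ :=
    hφFc.integrable_of_hasCompactSupport (isClosed_tsupport _).isCompact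
  have hintFg : Integrable (fun y => φF (g y)) μ :=
    (hφFc.comp hgc).integrable_of_hasCompactSupport (isClosed_tsupport _).isCompact
  have hintG : Integrable φG μ :=
    hφGc.integrable_of_hasCompactSupport (isClosed_tsupport _).isCompact
  have hcomp : (∫ y, φF (g y) ∂μ) = ∫ y, φF y ∂μ := by
    calc (∫ y, φF (g y) ∂μ)
        = ∫ y, φF y ∂(Measure.map g μ) :=
          (integral_map hgc.measurable.aemeasurable hφFc.aestronglyMeasurable).symm
      _ = ∫ y, φF y ∂μ := by rw [hinvg]
  have hIeq : (∫ y, φFG y ∂μ) = τF + τG := by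
    rw [hφFGdef]
    rw [integral_add hintFg hintG, hcomp, hτFeq, hτGeq]
  rw [← hIeq]
  exact hFGlim
end

section
/- Let f₀(x,y) = (x+y, y) and g₀(x,y) = (x, y+1) on ℝ². For ANY choices of lifts of the induced maps on the annulus ℝ²/⟨h₀⟩ (h₀ horizontal translation by 1) — that is, for any F = h₀^a ∘ f₀ and G = h₀^b ∘ g₀ with a, b ∈ ℤ — the commutator [F, G] equals [f₀, g₀] ≠ id. In particular F and G never commute. -/
def planeF0 : Equiv.Perm (ℝ × ℝ) where
  toFun p := (p.1 + p.2, p.2)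
  invFun p := (p.1 - p.2, p.2)
  left_inv := by rintro ⟨x, y⟩; simp
  right_inv := by rintro ⟨x, y⟩; simp

def planeG0 : Equiv.Perm (ℝ × ℝ) where
  toFun p := (p.1, p.2 + 1)
  invFun p := (p.1, p.2 - 1)
  left_inv := by rintro ⟨x, y⟩; simp
  right_inv := by rintro ⟨x, y⟩; simp

def planeH0 : Equiv.Perm (ℝ × ℝ) where
  toFun p := (p.1 + 1, p.2)
  invFun p := (p.1 - 1, p.2)
  left_inv := by rintro ⟨x, y⟩; simp
  right_inv := by rintro ⟨x, y⟩; simp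

lemma planeF0_apply (p : ℝ × ℝ) : planeF0 p = (p.1 + p.2, p.2) := rfl
lemma planeF0_inv_apply (p : ℝ × ℝ) : planeF0⁻¹ p = (p.1 - p.2, p.2) := rfl
lemma planeG0_apply (p : ℝ × ℝ) : planeG0 p = (p.1, p.2 + 1) := rfl
lemma planeG0_inv_apply (p : ℝ × ℝ) : planeG0⁻¹ p = (p.1, p.2 - 1) := rfl
lemma planeH0_apply (p : ℝ × ℝ) : planeH0 p = (p.1 + 1, p.2) := rfl
lemma planeH0_inv_apply (p : ℝ × ℝ) : planeH0⁻¹ p = (p.1 - 1, p.2) := rfl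

lemma hpow_apply (a : ℤ) : ∀ p : ℝ × ℝ, (planeH0 ^ a) p = (p.1 + a, p.2) := by
  induction a using Int.induction_on with
  | zero => simp
  | succ n ih =>
      intro p
      rw [zpow_add_one, Equiv.Perm.mul_apply, planeH0_apply, ih]
      push_cast; ring_nf
  | pred n ih =>
      intro p
      rw [zpow_sub_one, Equiv.Perm.mul_apply, planeH0_inv_apply, ih]
      push_cast; ring_nf

lemma hpow_inv_apply (a : ℤ) (p : ℝ × ℝ) : (planeH0 ^ a)⁻¹ p = (p.1 - a, p.2) := by
  rw [← zpow_neg, hpow_apply]; push_cast; ring_nf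

open scoped commutatorElement

/-- For ANY choices of lifts `F = h₀^a ∘ f₀` and `G = h₀^b ∘ g₀`
(`a, b ∈ ℤ`) of the induced annulus maps, the commutator `[F, G]` equals
`[f₀, g₀] ≠ id`; in particular `F` and `G` never commute. -/
theorem lifts_never_commute (a b : ℤ) :
    ⁅planeH0 ^ a * planeF0, planeH0 ^ b * planeG0⁆ = ⁅planeF0, planeG0⁆ ∧
    ⁅planeF0, planeG0⁆ ≠ 1 := by
  constructor
  · ext p
    · simp only [commutatorElement_def, mul_inv_rev, Equiv.Perm.mul_apply, hpow_apply,
        hpow_inv_apply, planeF0_apply, planeF0_inv_apply, planeG0_apply, planeG0_inv_apply]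
      ring
    · simp only [commutatorElement_def, mul_inv_rev, Equiv.Perm.mul_apply, hpow_apply,
        hpow_inv_apply, planeF0_apply, planeF0_inv_apply, planeG0_apply, planeG0_inv_apply]
  · intro h
    have := congrArg (fun e : Equiv.Perm (ℝ × ℝ) => (e (0, 0)).1) h
    simp only [commutatorElement_def, Equiv.Perm.mul_apply, planeF0_apply, planeF0_inv_apply,
      planeG0_apply, planeG0_inv_apply, Equiv.Perm.one_apply] at this
    norm_num at this
end

section
/- In the discrete Heisenberg group H = ⟨f, g : [f,g] = h central⟩, if m and n are coprime and a, b are integers with am + bn = 1, then the elements f^m g^n and f^{−b} g^a generate H. -/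
def HeisX : Matrix.SpecialLinearGroup (Fin 3) ℤ :=
  ⟨!![1, 1, 0; 0, 1, 0; 0, 0, 1], by simp [Matrix.det_fin_three, Matrix.vecHead, Matrix.vecTail]⟩

def HeisY : Matrix.SpecialLinearGroup (Fin 3) ℤ :=
  ⟨!![1, 0, 0; 0, 1, 1; 0, 0, 1], by simp [Matrix.det_fin_three, Matrix.vecHead, Matrix.vecTail]⟩

def Mel (p q r : ℤ) : Matrix.SpecialLinearGroup (Fin 3) ℤ :=
  ⟨!![1, p, r; 0, 1, q; 0, 0, 1], by simp [Matrix.det_fin_three, Matrix.vecHead, Matrix.vecTail]⟩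

lemma Mel_mul (p q r p' q' r' : ℤ) :
    Mel p q r * Mel p' q' r' = Mel (p + p') (q + q') (r + r' + p * q') := by
  apply Subtype.ext
  show (Mel p q r).1 * (Mel p' q' r').1 = _
  simp [Mel]
  refine ⟨⟨by ring, by ring⟩, by ring⟩

lemma Mel_one : Mel 0 0 0 = 1 := by
  apply Subtype.ext
  ext i j
  fin_cases i <;> fin_cases j <;> simp [Mel, Matrix.vecHead, Matrix.vecTail]

lemma Mel_inv (p q r : ℤ) : (Mel p q r)⁻¹ = Mel (-p) (-q) (p * q - r) := by
  apply inv_eq_of_mul_eq_one_right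
  rw [Mel_mul]
  rw [show p + -p = 0 by ring, show q + -q = 0 by ring,
    show r + (p * q - r) + p * -q = 0 by ring, Mel_one]

lemma Mel_heisX : HeisX = Mel 1 0 0 := rfl
lemma Mel_heisY : HeisY = Mel 0 1 0 := rfl

lemma Mel_zpow (p q : ℤ) (k : ℤ) : ∃ r, (Mel p q 0) ^ k = Mel (k * p) (k * q) r := by
  induction k using Int.induction_on with
  | zero => exact ⟨0, by simpa using Mel_one.symm⟩
  | succ k ih =>
      obtain ⟨r, hr⟩ := ih
      refine ⟨r + (k : ℤ) * p * q, ?_⟩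
      rw [zpow_add_one, hr, Mel_mul]
      ring_nf
  | pred k ih =>
      obtain ⟨r, hr⟩ := ih
      refine ⟨r + p * q + (k : ℤ) * p * q, ?_⟩
      rw [zpow_sub_one, hr, Mel_inv, Mel_mul]
      ring_nf

lemma Mel_zpow_z (k : ℤ) : (Mel 0 0 1) ^ k = Mel 0 0 k := by
  induction k using Int.induction_on with
  | zero => simpa using Mel_one.symm
  | succ k ih => rw [zpow_add_one, ih, Mel_mul]; ring_nf
  | pred k ih => rw [zpow_sub_one, ih, Mel_inv, Mel_mul]; ring_nf

/-- In the discrete Heisenberg group `H = ⟨f, g⟩` (with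
`h = [f,g]` central; here `f = X`, `g = Y` are the standard unitriangular
matrix generators), if `m` and `n` are coprime and `a·m + b·n = 1`, then the
elements `f^m g^n` and `f^{-b} g^a` generate `H`. -/
theorem heisenberg_generated_by_coprime_pair
    (m n a b : ℤ) (hmn : IsCoprime m n) (hab : a * m + b * n = 1) :
    Subgroup.closure ({HeisX ^ m * HeisY ^ n, HeisX ^ (-b) * HeisY ^ a} :
        Set (Matrix.SpecialLinearGroup (Fin 3) ℤ)) =
      Subgroup.closure {HeisX, HeisY} := by
  have hX : HeisX ∈ Subgroup.closure ({HeisX, HeisY} :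
      Set (Matrix.SpecialLinearGroup (Fin 3) ℤ)) :=
    Subgroup.subset_closure (Set.mem_insert _ _)
  have hY : HeisY ∈ Subgroup.closure ({HeisX, HeisY} :
      Set (Matrix.SpecialLinearGroup (Fin 3) ℤ)) :=
    Subgroup.subset_closure (Set.mem_insert_of_mem _ rfl)
  apply le_antisymm
  · rw [Subgroup.closure_le]
    rintro x (rfl | rfl)
    · exact mul_mem (zpow_mem hX m) (zpow_mem hY n)
    · exact mul_mem (zpow_mem hX (-b)) (zpow_mem hY a)
  · -- the hard direction
    set S := Subgroup.closure ({HeisX ^ m * HeisY ^ n, HeisX ^ (-b) * HeisY ^ a} :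
        Set (Matrix.SpecialLinearGroup (Fin 3) ℤ)) with hS
    -- compute the generators as Mel elements
    obtain ⟨ru, hru⟩ := Mel_zpow 1 0 m
    obtain ⟨rv, hrv⟩ := Mel_zpow 0 1 n
    obtain ⟨ru', hru'⟩ := Mel_zpow 1 0 (-b)
    obtain ⟨rv', hrv'⟩ := Mel_zpow 0 1 a
    have hu : HeisX ^ m * HeisY ^ n = Mel m n (ru + rv + m * n) := by
      rw [Mel_heisX, Mel_heisY, hru, hrv, Mel_mul]; ring_nf
    have hv : HeisX ^ (-b) * HeisY ^ a = Mel (-b) a (ru' + rv' + (-b) * a) := by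
      rw [Mel_heisX, Mel_heisY, hru', hrv', Mel_mul]; ring_nf
    have huS : Mel m n (ru + rv + m * n) ∈ S := by
      rw [← hu]; exact Subgroup.subset_closure (Set.mem_insert _ _)
    have hvS : Mel (-b) a (ru' + rv' + (-b) * a) ∈ S := by
      rw [← hv]; exact Subgroup.subset_closure (Set.mem_insert_of_mem _ rfl)
    -- generic: if Mel p q r, Mel p' q' r' ∈ S then their commutator Mel 0 0 (pq'-p'q) ∈ S
    have hcomm : ∀ p q r p' q' r', Mel p q r ∈ S → Mel p' q' r' ∈ S →
        Mel 0 0 (p * q' - p' * q) ∈ S := by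
      intro p q r p' q' r' h1 h2
      have := mul_mem (mul_mem (mul_mem h1 h2) (inv_mem h1)) (inv_mem h2)
      rwa [Mel_mul, Mel_inv, Mel_mul, Mel_inv, Mel_mul,
        show p + p' + -p + -p' = 0 by ring, show q + q' + -q + -q' = 0 by ring,
        show r + r' + p * q' + (p * q - r) + (p + p') * -q + (p' * q' - r') +
          (p + p' + -p) * -q' = p * q' - p' * q by ring] at this
    have hZ : Mel 0 0 1 ∈ S := by
      have := hcomm _ _ _ _ _ _ huS hvS
      rwa [show m * a - -b * n = 1 by linarith] at this
    -- any central Mel 0 0 r ∈ S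
    have hZr : ∀ r : ℤ, Mel 0 0 r ∈ S := fun r => by
      rw [← Mel_zpow_z]; exact zpow_mem hZ r
    -- if Mel p q r ∈ S then Mel p q r' ∈ S for all r'
    have hshift : ∀ p q r r', Mel p q r ∈ S → Mel p q r' ∈ S := by
      intro p q r r' h
      have := mul_mem h (hZr (r' - r))
      rwa [Mel_mul, show p + 0 = p by ring, show q + 0 = q by ring,
        show r + (r' - r) + p * 0 = r' by ring] at this
    -- powers and products
    have hmem : ∀ (x y : ℤ), ∃ r, Mel (x * m + y * (-b)) (x * n + y * a) r ∈ S := by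
      intro x y
      obtain ⟨r1, h1⟩ := Mel_zpow m n x
      obtain ⟨r2, h2⟩ := Mel_zpow (-b) a y
      refine ⟨r1 + r2 + (x * m) * (y * a), ?_⟩
      have hu0 : Mel m n 0 ∈ S := hshift _ _ _ _ huS
      have hv0 : Mel (-b) a 0 ∈ S := hshift _ _ _ _ hvS
      have := mul_mem (zpow_mem hu0 x) (zpow_mem hv0 y)
      rwa [h1, h2, Mel_mul] at this
    have hXS : HeisX ∈ S := by
      obtain ⟨r, hr⟩ := hmem a (-n)
      rw [show a * m + -n * -b = 1 by linarith, show a * n + -n * a = 0 by ring] at hr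
      rw [Mel_heisX]
      exact hshift _ _ _ _ hr
    have hYS : HeisY ∈ S := by
      obtain ⟨r, hr⟩ := hmem b m
      rw [show b * m + m * -b = 0 by ring, show b * n + m * a = 1 by linarith] at hr
      rw [Mel_heisY]
      exact hshift _ _ _ _ hr
    rw [Subgroup.closure_le]
    rintro x (rfl | rfl)
    · exact hXS
    · exact hYS
end

section
/- Let f, g, h be homeomorphisms of ℝ² with h(x,y) = (x+1,y), f∘h = h∘f, g∘h = h∘g, and [f,g] = h. Suppose ℓ ⊂ ℝ² is an h-invariant properly embedded line (the preimage of an essential circle in the annulus ℝ²/h) with f(ℓ) = ℓ. If there exists x ∈ ℓ with g(x) ∈ ℓ, then a contradiction follows; hence g(ℓ) ∩ ℓ = ∅, i.e., the projection ḡ moves the circle ℓ/h off itself. -/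
open Set Function Filter
lemma key_bound (H : ℝ ≃ₜ ℝ) (hHgt : ∀ t, t < H t)
    (φ : ℝ → ℝ) (hφc : Continuous φ) (hφH : ∀ t, φ (H t) = φ t + 1) :
    ∃ C : ℝ, ∀ F : ℝ → ℝ, Continuous F → Function.Injective F →
      (∀ t, F (H t) = H (F t)) → ∀ s t : ℝ, |φ (F t) - φ (F s)| ≤ |φ t - φ s| + C := by
  have hHmono : StrictMono (H : ℝ → ℝ) := by
    rcases H.continuous.strictMono_of_inj H.injective with hm | ha
    · exact hm
    · exact absurd (hHgt (H 0)) (not_lt.mpr (ha (hHgt 0)).le)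
  -- the ℤ-orbit of 0
  set c : ℤ → ℝ := fun m => (H.toEquiv ^ m) 0 with hcdef
  have happ : ∀ x : ℝ, H.toEquiv x = H x := fun _ => rfl
  have hz1 : ∀ (m : ℤ) (x : ℝ), (H.toEquiv ^ (m + 1)) x = H ((H.toEquiv ^ m) x) := by
    intro m x
    rw [add_comm, zpow_add, zpow_one, Equiv.Perm.mul_apply, happ]
  have hzsymm : ∀ (m : ℤ) (x : ℝ), H.symm ((H.toEquiv ^ m) x) = (H.toEquiv ^ (m - 1)) x := by
    intro m x
    have := hz1 (m - 1) x
    rw [sub_add_cancel] at this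
    rw [this, Homeomorph.symm_apply_apply]
  have hc1 : ∀ m : ℤ, c (m + 1) = H (c m) := fun m => hz1 m 0
  have hc0 : c 0 = 0 := by simp [hcdef]
  have hclt : ∀ m : ℤ, c m < c (m + 1) := fun m => by rw [hc1]; exact hHgt _
  have hcmono : StrictMono c := strictMono_int_of_lt_succ hclt
  have hφz : ∀ (m : ℤ) (x : ℝ), φ ((H.toEquiv ^ m) x) = φ x + m := by
    intro m
    induction m using Int.induction_on with
    | zero => intro x; simp
    | pred n ih =>
      intro x
      have h1 := hz1 (-(n:ℤ) - 1) x
      rw [sub_add_cancel] at h1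
      have h2 : φ ((H.toEquiv ^ (-(n:ℤ))) x) = φ ((H.toEquiv ^ (-(n:ℤ) - 1)) x) + 1 := by
        rw [h1, hφH]
      have := ih x
      rw [this] at h2
      push_cast at h2 ⊢
      linarith
    | succ n ih =>
      intro x
      rw [hz1, hφH, ih]
      push_cast
      ring
  -- every real lies above some orbit point
  have hlow : ∀ t : ℝ, ∃ m : ℤ, c m ≤ t := by
    intro t
    by_contra hcon
    push_neg at hcon
    set u : ℕ → ℝ := fun n => c (-(n : ℤ)) with hu
    have hanti : Antitone u := fun a b hab =>
      hcmono.monotone (neg_le_neg (by exact_mod_cast hab))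
    have hbdd : BddBelow (Set.range u) := ⟨t, by rintro _ ⟨n, rfl⟩; exact (hcon _).le⟩
    have hlim : Tendsto u atTop (nhds (⨅ n, u n)) := tendsto_atTop_ciInf hanti hbdd
    have hlim' : Tendsto (fun n => u (n + 1)) atTop (nhds (⨅ n, u n)) :=
      hlim.comp (tendsto_add_atTop_nat 1)
    have hHu : ∀ n : ℕ, H (u (n + 1)) = u n := by
      intro n
      have : u (n + 1) = c (-(n : ℤ) - 1) := by
        simp only [hu]; congr 1; omega
      rw [this, ← hc1 (-(n:ℤ) - 1)]
      congr 1; ring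
    have hlim2 : Tendsto (fun n => H (u (n + 1))) atTop (nhds (H (⨅ n, u n))) :=
      (H.continuous.tendsto _).comp hlim'
    have hlim3 : Tendsto (fun n => H (u (n + 1))) atTop (nhds (⨅ n, u n)) := by
      simp only [hHu]; exact hlim
    exact absurd (tendsto_nhds_unique hlim2 hlim3) (ne_of_gt (hHgt _))
  have hhigh : ∀ t : ℝ, ∃ m : ℤ, t < c m := by
    intro t
    by_contra hcon
    push_neg at hcon
    set u : ℕ → ℝ := fun n => c (n : ℤ) with hu
    have hmono : Monotone u := fun a b hab => hcmono.monotone (by exact_mod_cast hab)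
    have hbdd : BddAbove (Set.range u) := ⟨t, fun y hy => by obtain ⟨n, rfl⟩ := hy; exact hcon _⟩
    have hlim : Tendsto u atTop (nhds (⨆ n, u n)) := tendsto_atTop_ciSup hmono hbdd
    have hlim' : Tendsto (fun n => u (n + 1)) atTop (nhds (⨆ n, u n)) :=
      hlim.comp (tendsto_add_atTop_nat 1)
    have hHu : ∀ n : ℕ, H (u n) = u (n + 1) := by
      intro n
      have : u (n + 1) = c ((n : ℤ) + 1) := by simp only [hu]; congr 1
      rw [this, hc1]
    have hlim2 : Tendsto (fun n => H (u n)) atTop (nhds (H (⨆ n, u n))) :=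
      (H.continuous.tendsto _).comp hlim
    have hlim3 : Tendsto (fun n => H (u n)) atTop (nhds (⨆ n, u n)) := by
      simp only [hHu]; exact hlim'
    exact absurd (tendsto_nhds_unique hlim2 hlim3) (ne_of_lt (hHgt _)).symm
  -- integer "level" function
  have hNex : ∀ t : ℝ, ∃ m : ℤ, c m ≤ t ∧ t < c (m + 1) := by
    intro t
    obtain ⟨b, hb⟩ := hhigh t
    obtain ⟨a, ha⟩ := hlow t
    obtain ⟨m, hm, hmax⟩ := Int.exists_greatest_of_bdd (P := fun m => c m ≤ t)
      ⟨b, fun z hz => (hcmono.lt_iff_lt.mp (lt_of_le_of_lt hz hb)).le⟩ ⟨a, ha⟩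
    refine ⟨m, hm, ?_⟩
    by_contra hcon
    push_neg at hcon
    exact absurd (hmax _ hcon) (by omega)
  have hNuniq : ∀ (t : ℝ) (m m' : ℤ), c m ≤ t → t < c (m + 1) → c m' ≤ t → t < c (m' + 1) →
      m = m' := by
    intro t m m' h1 h2 h1' h2'
    by_contra hne
    rcases lt_or_gt_of_ne hne with hlt | hlt
    · exact absurd (le_trans (hcmono.monotone (by omega : m + 1 ≤ m')) h1') (not_le.mpr h2)
    · exact absurd (le_trans (hcmono.monotone (by omega : m' + 1 ≤ m)) h1) (not_le.mpr h2')
  set N : ℝ → ℤ := fun t => (hNex t).choose with hNdef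
  have hNl : ∀ t, c (N t) ≤ t := fun t => (hNex t).choose_spec.1
  have hNr : ∀ t, t < c (N t + 1) := fun t => (hNex t).choose_spec.2
  have hNspec : ∀ (t : ℝ) (m : ℤ), c m ≤ t → t < c (m + 1) → N t = m :=
    fun t m h1 h2 => hNuniq t (N t) m (hNl t) (hNr t) h1 h2
  have hNH : ∀ y, N (H y) = N y + 1 := by
    intro y
    refine hNspec _ _ ?_ ?_
    · rw [hc1]; exact hHmono.monotone (hNl y)
    · rw [hc1]; exact hHmono (hNr y)
  have hNz : ∀ (m : ℤ) (y : ℝ), N ((H.toEquiv ^ m) y) = N y + m := by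
    intro m
    induction m using Int.induction_on with
    | zero => intro y; simp
    | succ n ih => intro y; rw [hz1, hNH, ih]; ring
    | pred n ih =>
      intro y
      have h1 := hz1 (-(n:ℤ) - 1) y
      rw [sub_add_cancel] at h1
      have : N ((H.toEquiv ^ (-(n:ℤ))) y) = N ((H.toEquiv ^ (-(n:ℤ) - 1)) y) + 1 := by
        rw [h1, hNH]
      rw [ih y] at this
      omega
  have hNmono : Monotone N := by
    intro a b hab
    by_contra hcon
    push_neg at hcon
    have h1 : c (N b + 1) ≤ c (N a) := hcmono.monotone (by omega)
    exact absurd (lt_of_le_of_lt (h1.trans (hNl a)) (lt_of_le_of_lt hab (hNr b)))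
      (lt_irrefl _)
  -- bound for φ on a fundamental domain
  obtain ⟨M, hM⟩ := (isCompact_Icc (a := (0:ℝ)) (b := c 1)).exists_bound_of_continuousOn
    hφc.continuousOn
  have hM0 : 0 ≤ M := le_trans (norm_nonneg _) (hM 0 ⟨le_refl 0, by rw [← hc0]; exact (hclt 0).le⟩)
  have hNφ : ∀ t : ℝ, |φ t - (N t : ℝ)| ≤ M := by
    intro t
    set u : ℝ := (H.toEquiv ^ (-(N t))) t with hudef
    have hNu : N u = 0 := by rw [hudef, hNz]; omega
    have hu0 : c 0 ≤ u := by rw [← hNu]; exact hNl u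
    have hu1 : u < c 1 := by
      have := hNr u; rwa [hNu, zero_add] at this
    have hut : (H.toEquiv ^ (N t : ℤ)) u = t := by
      rw [hudef, ← Equiv.Perm.mul_apply, ← zpow_add, add_neg_cancel, zpow_zero,
        Equiv.Perm.one_apply]
    have hφt : φ t = φ u + N t := by
      have := hφz (N t) u; rw [hut] at this; exact this
    rw [hφt]
    simpa using (hM u ⟨by rwa [hc0] at hu0, hu1.le⟩)
  refine ⟨4 * M + 1, ?_⟩
  intro F hFc hFi hFH
  have hFmono : StrictMono F := by
    rcases hFc.strictMono_of_inj hFi with hm | ha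
    · exact hm
    · exfalso
      have h1 : F 0 < F (H 0) := by rw [hFH]; exact hHgt _
      exact absurd h1 (not_lt.mpr (ha (hHgt 0)).le)
  have hFz : ∀ (m : ℤ) (y : ℝ), F ((H.toEquiv ^ m) y) = (H.toEquiv ^ m) (F y) := by
    intro m
    induction m using Int.induction_on with
    | zero => intro y; simp
    | succ n ih => intro y; rw [hz1, hz1, hFH, ih]
    | pred n ih =>
      intro y
      have h1 : ((H.toEquiv ^ (-(n:ℤ) - 1)) y) = H.symm ((H.toEquiv ^ (-(n:ℤ))) y) :=
        (hzsymm _ _).symm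
      rw [h1]
      have h2 : ∀ z, F (H.symm z) = H.symm (F z) := by
        intro z
        have := hFH (H.symm z)
        rw [Homeomorph.apply_symm_apply] at this
        rw [← Homeomorph.symm_apply_apply H (F (H.symm z)), ← this]
      rw [h2, ih, hzsymm]
  have hNFc : ∀ m : ℤ, N (F (c m)) = N (F 0) + m := by
    intro m
    have : F (c m) = (H.toEquiv ^ m) (F 0) := hFz m 0
    rw [this, hNz]
  have kb : ∀ s t : ℝ, s ≤ t → N (F s) ≤ N (F t) ∧
      N (F t) ≤ N (F s) + (N t - N s) + 1 := by
    intro s t hst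
    constructor
    · exact hNmono (hFmono.monotone hst)
    · have h1 : N (F 0) + N s ≤ N (F s) := by
        rw [← hNFc]; exact hNmono (hFmono.monotone (hNl s))
      have h2 : N (F t) ≤ N (F 0) + (N t + 1) := by
        rw [← hNFc]; exact hNmono (hFmono.monotone (hNr t).le)
      omega
  have main : ∀ s t : ℝ, s ≤ t → |φ (F t) - φ (F s)| ≤ |φ t - φ s| + (4 * M + 1) := by
    intro s t hst
    obtain ⟨k1, k2⟩ := kb s t hst
    have hNst : N s ≤ N t := hNmono hst
    have e1 := abs_le.mp (hNφ (F t))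
    have e2 := abs_le.mp (hNφ (F s))
    have e3 := abs_le.mp (hNφ t)
    have e4 := abs_le.mp (hNφ s)
    have k1' : (0:ℝ) ≤ (N (F t) : ℝ) - N (F s) := by
      rw [sub_nonneg]; exact_mod_cast k1
    have k2' : ((N (F t)) : ℝ) ≤ (N (F s) : ℝ) + ((N t : ℝ) - N s) + 1 := by exact_mod_cast k2
    have hNst' : (0:ℝ) ≤ (N t : ℝ) - N s := by rw [sub_nonneg]; exact_mod_cast hNst
    have hle := le_abs_self (φ t - φ s)
    have habs := abs_nonneg (φ t - φ s)
    rw [abs_sub_le_iff]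
    constructor <;> linarith
  intro s t
  rcases le_total s t with hst | hts
  · exact main s t hst
  · rw [abs_sub_comm, abs_sub_comm (φ t)]
    exact main t s hts


/-- Let `f, g, h` be homeomorphisms of `ℝ²` with `h` the horizontal
translation by 1, `f` and `g` commuting with `h`, and `[f,g] = h` (expressed as
`f ∘ g = h ∘ g ∘ f`). Let `ℓ` be an `h`-invariant properly embedded line — the
preimage of an essential circle in the annulus `ℝ²/h`, so that `ℓ` is cocompact
under the integer horizontal translations — with `f(ℓ) = ℓ`. Then `g(ℓ) ∩ ℓ = ∅`:
no point of `ℓ` is sent by `g` into `ℓ`. -/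
theorem invariant_line_moved_off_itself
    (f g h : (ℝ × ℝ) ≃ₜ (ℝ × ℝ))
    (hh : ∀ p : ℝ × ℝ, h p = (p.1 + 1, p.2))
    (hfh : ∀ p, f (h p) = h (f p)) (hgh : ∀ p, g (h p) = h (g p))
    (hcomm : ∀ p, f (g p) = h (g (f p)))
    (ℓ : Set (ℝ × ℝ))
    (γ : ℝ → ℝ × ℝ) (hγ : Topology.IsClosedEmbedding γ) (hrange : Set.range γ = ℓ)
    (hinv : h '' ℓ = ℓ)
    (hcocompact : ∃ K : Set (ℝ × ℝ), IsCompact K ∧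
      ℓ ⊆ ⋃ n : ℤ, (fun p : ℝ × ℝ => (p.1 + n, p.2)) '' K)
    (hfℓ : f '' ℓ = ℓ) :
    ∀ x ∈ ℓ, g x ∉ ℓ := by
  intro x hx hgx
  obtain ⟨K, hK, hKcov⟩ := hcocompact
  set T : ℝ → ℝ × ℝ → ℝ × ℝ := fun r p => (p.1 + r, p.2) with hTdef
  have hTh : ∀ p, h p = T 1 p := fun p => hh p
  have hTT : ∀ (r s : ℝ) (p), T r (T s p) = T (r + s) p := by
    intro r s p; simp [hTdef]; ring
  have hTeq : ∀ (r s : ℝ) (p), r = s → T r p = T s p := fun r s p e => by rw [e]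
  have hT0 : ∀ p, T 0 p = p := by intro p; simp [hTdef]
  have hf1 : ∀ p, f (T 1 p) = T 1 (f p) := by
    intro p; have := hfh p; rwa [hTh, hTh] at this
  have hg1 : ∀ p, g (T 1 p) = T 1 (g p) := by
    intro p; have := hgh p; rwa [hTh, hTh] at this
  have hcomm' : ∀ p, f (g p) = T 1 (g (f p)) := by
    intro p; have := hcomm p; rwa [hTh] at this
  have hfz : ∀ (n : ℕ) (p), f (T n p) = T n (f p) := by
    intro n
    induction n with
    | zero => intro p; simp [hTdef]
    | succ n ih =>
      intro p
      have e : T ((n : ℝ) + 1) p = T 1 (T n p) := by rw [hTT]; ring_nf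
      calc f (T ((n:ℕ) + 1 : ℕ) p) = f (T 1 (T n p)) := by rw [← e]; norm_num
        _ = T 1 (f (T n p)) := hf1 _
        _ = T 1 (T n (f p)) := by rw [ih]
        _ = T ((n:ℕ) + 1 : ℕ) (f p) := by rw [hTT]; exact hTeq _ _ _ (by push_cast; ring)
  have hgz : ∀ (m : ℤ) (p), g (T m p) = T m (g p) := by
    intro m
    induction m using Int.induction_on with
    | zero => intro p; simp [hTdef]
    | succ n ih =>
      intro p
      have e : T (((n:ℤ) + 1 : ℤ) : ℝ) p = T 1 (T ((n:ℤ) : ℝ) p) := by rw [hTT]; exact hTeq _ _ _ (by push_cast; ring)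
      rw [e, hg1, ih, hTT]
      exact hTeq _ _ _ (by push_cast; ring)
    | pred n ih =>
      intro p
      have e : T (1:ℝ) (T ((-(n:ℤ) - 1 : ℤ) : ℝ) p) = T ((-(n:ℤ) : ℤ) : ℝ) p := by
        rw [hTT]; exact hTeq _ _ _ (by push_cast; ring)
      have e2 := hg1 (T ((-(n:ℤ) - 1 : ℤ) : ℝ) p)
      rw [e, ih] at e2
      have e3 := congrArg (T (-1 : ℝ)) e2
      rw [hTT, hTT, hTeq ((-1:ℝ) + 1) 0 _ (by ring), hT0] at e3
      rw [← e3]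
      exact hTeq _ _ _ (by push_cast; ring)
  have hkey : ∀ (n : ℕ) (p), (⇑f)^[n] (g p) = T n (g ((⇑f)^[n] p)) := by
    intro n
    induction n with
    | zero => intro p; simp [hTdef]
    | succ n ih =>
      intro p
      rw [Function.iterate_succ_apply' (⇑f) n (g p), ih, hfz, hcomm', hTT,
        ← Function.iterate_succ_apply' (⇑f) n p]
      exact hTeq _ _ _ (by push_cast; ring)
  -- bound for g-displacement on ℓ
  obtain ⟨B, hB⟩ := hK.exists_bound_of_continuousOn
    (f := fun k : ℝ × ℝ => (g k).1 - k.1)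
    ((continuous_fst.comp g.continuous).sub continuous_fst).continuousOn
  have hBl : ∀ y ∈ ℓ, |(g y).1 - y.1| ≤ B := by
    intro y hy
    obtain ⟨m, hm⟩ := Set.mem_iUnion.mp (hKcov hy)
    obtain ⟨k, hkK, hk⟩ := hm
    have hky : T (m : ℝ) k = y := hk
    have hgy : g y = T (m : ℝ) (g k) := by rw [← hky, hgz]
    have : (g y).1 - y.1 = (g k).1 - k.1 := by rw [hgy, ← hky]; simp [hTdef]
    rw [this, ← Real.norm_eq_abs]
    exact hB k hkK
  -- homeomorphisms of ℝ induced by f and h on ℓ via γ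
  have hγemb := hγ.toIsEmbedding
  set E : ℝ ≃ₜ Set.range γ := hγemb.toHomeomorph with hEdef
  have hEval : ∀ t, ((E t : ℝ × ℝ)) = γ t := fun t => rfl
  have hEsymm : ∀ y : Set.range γ, γ (E.symm y) = (y : ℝ × ℝ) := by
    intro y
    rw [← hEval, E.apply_symm_apply]
  have hfrng : f '' Set.range γ = Set.range γ := by rw [hrange]; exact hfℓ
  have hhrng : h '' Set.range γ = Set.range γ := by rw [hrange]; exact hinv
  set F : ℝ ≃ₜ ℝ :=
    (E.trans ((f.image (Set.range γ)).trans (Homeomorph.setCongr hfrng))).trans E.symm with hFdef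
  set Hh : ℝ ≃ₜ ℝ :=
    (E.trans ((h.image (Set.range γ)).trans (Homeomorph.setCongr hhrng))).trans E.symm with hHhdef
  have hFval : ∀ t, γ (F t) = f (γ t) := by
    intro t
    show γ (E.symm ((Homeomorph.setCongr hfrng) ((f.image (Set.range γ)) (E t)))) = f (γ t)
    rw [hEsymm]
    rfl
  have hHval : ∀ t, γ (Hh t) = h (γ t) := by
    intro t
    show γ (E.symm ((Homeomorph.setCongr hhrng) ((h.image (Set.range γ)) (E t)))) = h (γ t)
    rw [hEsymm]
    rfl
  set φ : ℝ → ℝ := fun t => (γ t).1 with hφdef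
  have hφc : Continuous φ := continuous_fst.comp hγ.continuous
  have hφH : ∀ t, φ (Hh t) = φ t + 1 := by
    intro t
    show (γ (Hh t)).1 = (γ t).1 + 1
    rw [hHval, hh]
  have hγinj : Function.Injective γ := hγemb.injective
  have hFH : ∀ t, F (Hh t) = Hh (F t) := by
    intro t
    apply hγinj
    rw [hFval, hHval, hHval, hFval, hfh]
  have hHne : ∀ t, Hh t ≠ t := by
    intro t heq
    have h1 : γ (Hh t) = γ t := by rw [heq]
    rw [hHval, hh] at h1
    have := congrArg Prod.fst h1
    simp at this
  -- dichotomy for the fixed-point free map Hh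
  have hdich : (∀ t, t < Hh t) ∨ (∀ t, Hh t < t) := by
    by_contra hcon
    push_neg at hcon
    obtain ⟨⟨a, ha⟩, ⟨b, hb⟩⟩ := hcon
    have hGa : Hh a - a < 0 := sub_neg.mpr (lt_of_le_of_ne ha (hHne a))
    have hGb : 0 < Hh b - b := sub_pos.mpr (lt_of_le_of_ne hb (fun q => hHne b q.symm))
    have hGc : Continuous (fun t => Hh t - t) := Hh.continuous.sub continuous_id
    rcases le_total a b with hab | hba
    · obtain ⟨u, _, hu⟩ := intermediate_value_Icc hab hGc.continuousOn
        ⟨hGa.le, hGb.le⟩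
      exact hHne u (by linarith [sub_eq_zero.mp hu])
    · obtain ⟨u, _, hu⟩ := intermediate_value_Icc' hba hGc.continuousOn
        ⟨hGa.le, hGb.le⟩
      exact hHne u (by linarith [sub_eq_zero.mp hu])
  -- uniform bound from the key lemma (both orientations)
  have hCmain : ∃ C : ℝ, ∀ F' : ℝ → ℝ, Continuous F' → Function.Injective F' →
      (∀ t, F' (Hh t) = Hh (F' t)) → ∀ s t, |φ (F' t) - φ (F' s)| ≤ |φ t - φ s| + C := by
    rcases hdich with hgt | hlt
    · exact key_bound Hh hgt φ hφc hφH
    · obtain ⟨C, hC⟩ := key_bound Hh.symm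
        (fun t => by
          have := hlt (Hh.symm t); rwa [Homeomorph.apply_symm_apply] at this)
        (fun t => -φ t) hφc.neg
        (fun t => by
          have := hφH (Hh.symm t)
          rw [Homeomorph.apply_symm_apply] at this
          linarith)
      refine ⟨C, ?_⟩
      intro F' h1 h2 h3 s t
      have h3' : ∀ y, F' (Hh.symm y) = Hh.symm (F' y) := by
        intro y
        have := h3 (Hh.symm y)
        rw [Homeomorph.apply_symm_apply] at this
        rw [← Homeomorph.symm_apply_apply Hh (F' (Hh.symm y)), ← this]
      have hres := hC F' h1 h2 h3' s t
      simp only [neg_sub_neg] at hres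
      rwa [abs_sub_comm (φ (F' s)), abs_sub_comm (φ s)] at hres
  obtain ⟨C, hC⟩ := hCmain
  -- iterates of F
  have hγFn : ∀ (n : ℕ) (t : ℝ), γ ((⇑F)^[n] t) = (⇑f)^[n] (γ t) := by
    intro n
    induction n with
    | zero => intro t; simp
    | succ n ih =>
      intro t
      rw [Function.iterate_succ_apply' (⇑F) n t, Function.iterate_succ_apply' (⇑f) n (γ t),
        hFval, ih]
  have hFHn : ∀ (n : ℕ) (t : ℝ), (⇑F)^[n] (Hh t) = Hh ((⇑F)^[n] t) := by
    intro n
    induction n with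
    | zero => intro t; simp
    | succ n ih =>
      intro t
      rw [Function.iterate_succ_apply' (⇑F) n (Hh t), ih, hFH,
        Function.iterate_succ_apply' (⇑F) n t]
  obtain ⟨s0, hs0⟩ : x ∈ Set.range γ := by rw [hrange]; exact hx
  obtain ⟨t0, ht0⟩ : g x ∈ Set.range γ := by rw [hrange]; exact hgx
  obtain ⟨n, hn⟩ := exists_nat_gt (|φ t0 - φ s0| + C + B)
  set y : ℝ × ℝ := (⇑f)^[n] x with hydef
  have hyγ : y = γ ((⇑F)^[n] s0) := by rw [hγFn, hs0]
  have hyℓ : y ∈ ℓ := by rw [← hrange, hyγ]; exact Set.mem_range_self _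
  have e1 : φ ((⇑F)^[n] s0) = y.1 := by rw [hyγ]
  have e2 : φ ((⇑F)^[n] t0) = (g y).1 + n := by
    show (γ ((⇑F)^[n] t0)).1 = (g y).1 + n
    rw [hγFn, ht0, hkey n x]
  have hbound := hC ((⇑F)^[n]) (F.continuous.iterate n) (F.injective.iterate n)
    (hFHn n) s0 t0
  have hBy := abs_le.mp (hBl y hyℓ)
  have hle : φ ((⇑F)^[n] t0) - φ ((⇑F)^[n] s0) ≤ |φ t0 - φ s0| + C :=
    le_trans (le_abs_self _) hbound
  rw [e1, e2] at hle
  linarith [hBy.1, hn]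
end

section
/- Define f(x,y) = (x + y, y + l(y)) with l(y) = (sin(π(2y + 1/2)) + 1)/8, and g(x,y) = (x, y+1), h(x,y) = (x+1, y) on ℝ². Then [f,g] = h, f and g each commute with h, f maps the x-axis strictly above itself (the second coordinate of f(x,0) is l(0) = 1/4 > 0), yet for every n ≥ 0 and every point p on the x-axis, the second coordinate of fⁿ(p) is bounded above by 1/2. -/
open Real

/-- The bump function `l(y) = (sin(π(2y + 1/2)) + 1)/8`. -/
noncomputable def bumpL (y : ℝ) : ℝ := (Real.sin (π * (2 * y + 1 / 2)) + 1) / 8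

/-- `f(x,y) = (x + y, y + l(y))`. -/
noncomputable def exF (p : ℝ × ℝ) : ℝ × ℝ := (p.1 + p.2, p.2 + bumpL p.2)

/-- `g(x,y) = (x, y + 1)`. -/
def exG (p : ℝ × ℝ) : ℝ × ℝ := (p.1, p.2 + 1)

/-- `h(x,y) = (x + 1, y)`. -/
def exH (p : ℝ × ℝ) : ℝ × ℝ := (p.1 + 1, p.2)

lemma bumpL_eq (y : ℝ) : bumpL y = (Real.cos (2 * π * y) + 1) / 8 := by
  unfold bumpL
  rw [show π * (2 * y + 1 / 2) = 2 * π * y + π / 2 by ring, Real.sin_add_pi_div_two]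

lemma bumpL_add_one (y : ℝ) : bumpL (y + 1) = bumpL y := by
  rw [bumpL_eq, bumpL_eq, show 2 * π * (y + 1) = 2 * π * y + 2 * π by ring,
    Real.cos_add_two_pi]

lemma bumpL_step {y : ℝ} (hy : y ≤ 1 / 2) : y + bumpL y ≤ 1 / 2 := by
  rw [bumpL_eq]
  rcases le_or_gt y (1/4) with h | h
  · nlinarith [Real.cos_le_one (2 * π * y)]
  · set ε : ℝ := 1/2 - y with hε
    have hc : Real.cos (2 * π * y) = -Real.cos (2 * π * ε) := by
      rw [show 2 * π * y = π - 2 * π * ε by rw [hε]; ring, Real.cos_pi_sub]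
    have hb : 1 - (2 * π * ε)^2 / 2 ≤ Real.cos (2 * π * ε) :=
      Real.one_sub_sq_div_two_le_cos
    have hε0 : 0 ≤ ε := by simp [hε]; linarith
    have hε1 : ε ≤ 1/4 := by rw [hε]; linarith
    rw [hc]
    have hpp : π ^ 2 ≤ 10 := by nlinarith [Real.pi_lt_d2, Real.pi_pos]
    have he2 : ε ^ 2 ≤ ε / 4 := by nlinarith
    nlinarith [mul_le_mul_of_nonneg_right hpp (sq_nonneg ε)]

/-- For `f(x,y) = (x+y, y+l(y))` with
`l(y) = (sin(π(2y+1/2))+1)/8`, `g(x,y) = (x,y+1)`, `h(x,y) = (x+1,y)`: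
the commutator relation `f ∘ g = h ∘ g ∘ f` holds (i.e. `[f,g] = h`), `f` and
`g` each commute with `h`, `f` moves the `x`-axis strictly above itself (the
second coordinate of `f(x,0)` is `l(0) = 1/4 > 0`), yet all forward iterates of
the `x`-axis under `f` stay below the line `y = 1/2`. -/
theorem bounded_images_example :
    (∀ p, exF (exG p) = exH (exG (exF p))) ∧
    (∀ p, exF (exH p) = exH (exF p)) ∧
    (∀ p, exG (exH p) = exH (exG p)) ∧
    (∀ x : ℝ, (exF (x, 0)).2 = 1 / 4) ∧
    (0 : ℝ) < 1 / 4 ∧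
    (∀ (n : ℕ) (p : ℝ × ℝ), p.2 = 0 → (exF^[n] p).2 ≤ 1 / 2) := by
  refine ⟨?_, ?_, ?_, ?_, by norm_num, ?_⟩
  · intro p
    simp only [exF, exG, exH, bumpL_add_one]
    exact Prod.ext (by ring) (by ring)
  · intro p; simp only [exF, exG, exH]; exact Prod.ext (by ring) rfl
  · intro p; rfl
  · intro x
    simp only [exF, bumpL]
    norm_num
    rw [show π * (1 / 2 : ℝ) = π / 2 by ring, Real.sin_pi_div_two]
    norm_num
  · intro n p hp
    induction n with
    | zero => simpa [hp] using (by norm_num : (0:ℝ) ≤ 1/2)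
    | succ k ih =>
      rw [Function.iterate_succ_apply']
      exact bumpL_step ih
end

section
/- Two commuting orientation-preserving homeomorphisms f, g of the circle ℝ/ℤ admit commuting lifts to ℝ: there exist lifts F of f and G of g with F∘G = G∘F. -/
open CircleDeg1Lift

/-- Two commuting orientation-preserving homeomorphisms `f, g` of
the circle `ℝ/ℤ` admit commuting lifts to `ℝ`. Orientation preservation is
expressed by the existence of (strictly) increasing lifts. -/
theorem commuting_circle_homeos_have_commuting_lifts
    (f g : AddCircle (1 : ℝ) ≃ₜ AddCircle (1 : ℝ))
    (hfg : ∀ x, f (g x) = g (f x))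
    (F₀ G₀ : ℝ → ℝ)
    (hF₀c : Continuous F₀) (hF₀m : StrictMono F₀) (hF₀s : Function.Surjective F₀)
    (hF₀per : ∀ x : ℝ, F₀ (x + 1) = F₀ x + 1)
    (hF₀lift : ∀ x : ℝ, f (x : AddCircle (1 : ℝ)) = ((F₀ x : ℝ) : AddCircle (1 : ℝ)))
    (hG₀c : Continuous G₀) (hG₀m : StrictMono G₀) (hG₀s : Function.Surjective G₀)
    (hG₀per : ∀ x : ℝ, G₀ (x + 1) = G₀ x + 1)
    (hG₀lift : ∀ x : ℝ, g (x : AddCircle (1 : ℝ)) = ((G₀ x : ℝ) : AddCircle (1 : ℝ))) :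
    ∃ F G : ℝ → ℝ,
      Continuous F ∧ StrictMono F ∧ Function.Surjective F ∧
      (∀ x : ℝ, F (x + 1) = F x + 1) ∧
      (∀ x : ℝ, f (x : AddCircle (1 : ℝ)) = ((F x : ℝ) : AddCircle (1 : ℝ))) ∧
      Continuous G ∧ StrictMono G ∧ Function.Surjective G ∧
      (∀ x : ℝ, G (x + 1) = G x + 1) ∧
      (∀ x : ℝ, g (x : AddCircle (1 : ℝ)) = ((G x : ℝ) : AddCircle (1 : ℝ))) ∧
      F ∘ G = G ∘ F := by
  -- Step 1: for every x, F₀ (G₀ x) - G₀ (F₀ x) is an integer.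
  have hint : ∀ x : ℝ, ∃ m : ℤ, F₀ (G₀ x) - G₀ (F₀ x) = (m : ℝ) := by
    intro x
    have h1 : ((F₀ (G₀ x) : ℝ) : AddCircle (1 : ℝ)) = ((G₀ (F₀ x) : ℝ) : AddCircle (1 : ℝ)) := by
      rw [← hF₀lift, ← hG₀lift, ← hG₀lift, ← hF₀lift, hfg]
    have h2 : ((F₀ (G₀ x) - G₀ (F₀ x) : ℝ) : AddCircle (1 : ℝ)) = 0 := by
      have := sub_eq_zero.mpr h1
      rwa [← AddCircle.coe_sub] at this
    obtain ⟨m, hm⟩ := (AddCircle.coe_eq_zero_iff (1 : ℝ)).mp h2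
    exact ⟨m, by simpa using hm.symm⟩
  -- Step 2: the difference is a constant integer n (IVT).
  set h : ℝ → ℝ := fun x => F₀ (G₀ x) - G₀ (F₀ x) with hh
  have hhc : Continuous h := (hF₀c.comp hG₀c).sub (hG₀c.comp hF₀c)
  obtain ⟨n, hn0⟩ := hint 0
  have hconst : ∀ x : ℝ, h x = (n : ℝ) := by
    intro x
    obtain ⟨m, hm⟩ := hint x
    rcases lt_trichotomy m n with hlt | heq | hgt
    · exfalso
      have hmem : ((n : ℝ) - 1/2) ∈ Set.uIcc (h 0) (h x) := by
        simp only [hh]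
        rw [hn0, hm, Set.uIcc_of_ge (by exact_mod_cast hlt.le)]
        constructor
        · have : (m : ℝ) ≤ (n : ℝ) - 1 := by exact_mod_cast Int.le_sub_one_iff.mpr hlt
          linarith
        · linarith
      obtain ⟨c, _, hc⟩ := intermediate_value_uIcc (hhc.continuousOn) hmem
      obtain ⟨k, hk⟩ := hint c
      have : (k : ℝ) = (n : ℝ) - 1/2 := by rw [← hk]; exact hc
      have : (2 : ℝ) * k = 2 * n - 1 := by linarith
      have : (2 : ℤ) * k = 2 * n - 1 := by exact_mod_cast this
      omega
    · simp only [hh]; rw [hm, heq]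
    · exfalso
      have hmem : ((n : ℝ) + 1/2) ∈ Set.uIcc (h 0) (h x) := by
        simp only [hh]
        rw [hn0, hm, Set.uIcc_of_le (by exact_mod_cast hgt.le)]
        constructor
        · linarith
        · have : (n : ℝ) + 1 ≤ (m : ℝ) := by exact_mod_cast hgt
          linarith
      obtain ⟨c, _, hc⟩ := intermediate_value_uIcc (hhc.continuousOn) hmem
      obtain ⟨k, hk⟩ := hint c
      have : (k : ℝ) = (n : ℝ) + 1/2 := by rw [← hk]; exact hc
      have : (2 : ℝ) * k = 2 * n + 1 := by linarith
      have : (2 : ℤ) * k = 2 * n + 1 := by exact_mod_cast this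
      omega
  -- Package F₀, G₀ as `CircleDeg1Lift`s.
  set Fl : CircleDeg1Lift := ⟨⟨F₀, hF₀m.monotone⟩, hF₀per⟩ with hFl
  set Gl : CircleDeg1Lift := ⟨⟨G₀, hG₀m.monotone⟩, hG₀per⟩ with hGl
  have hFlapp : ∀ x, Fl x = F₀ x := fun _ => rfl
  have hGlapp : ∀ x, Gl x = G₀ x := fun _ => rfl
  have hFlbij : Function.Bijective Fl := ⟨hF₀m.injective, hF₀s⟩
  obtain ⟨Fu, hFu⟩ := CircleDeg1Lift.isUnit_iff_bijective.mpr hFlbij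
  -- Step 3: `Fl * Gl = translate n * (Gl * Fl)` and conjugation invariance of τ force n = 0.
  have hmul : Fl * Gl =
      ((CircleDeg1Lift.translate (Multiplicative.ofAdd (n : ℝ))) : CircleDeg1Liftˣ) *
        (Gl * Fl) := by
    ext x
    have := hconst x
    simp only [hh] at this
    show F₀ (G₀ x) = (n : ℝ) + G₀ (F₀ x)
    linarith
  have hcomm : Commute
      (((CircleDeg1Lift.translate (Multiplicative.ofAdd (n : ℝ))) : CircleDeg1Liftˣ) :
        CircleDeg1Lift) (Gl * Fl) := by
    ext x
    show (n : ℝ) + Gl (Fl x) = Gl (Fl ((n : ℝ) + x))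
    rw [Fl.map_int_add, Gl.map_int_add]
  have hτ1 : CircleDeg1Lift.translationNumber (Fl * Gl) =
      (n : ℝ) + CircleDeg1Lift.translationNumber (Gl * Fl) := by
    rw [hmul, CircleDeg1Lift.translationNumber_mul_of_commute hcomm,
      CircleDeg1Lift.translationNumber_translate]
  have hconj : (Fu : CircleDeg1Lift) * (Gl * Fl) * ((Fu⁻¹ : CircleDeg1Liftˣ) : CircleDeg1Lift)
      = Fl * Gl := by
    rw [hFu]
    rw [show Fl * (Gl * Fl) * ((Fu⁻¹ : CircleDeg1Liftˣ) : CircleDeg1Lift)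
        = Fl * Gl * (Fl * ((Fu⁻¹ : CircleDeg1Liftˣ) : CircleDeg1Lift)) by
      rw [← mul_assoc, ← mul_assoc]]
    rw [← hFu]
    rw [show (Fu : CircleDeg1Lift) * ((Fu⁻¹ : CircleDeg1Liftˣ) : CircleDeg1Lift)
        = ((Fu * Fu⁻¹ : CircleDeg1Liftˣ) : CircleDeg1Lift) from rfl]
    rw [mul_inv_cancel]
    simp
  have hτ2 : CircleDeg1Lift.translationNumber (Fl * Gl) =
      CircleDeg1Lift.translationNumber (Gl * Fl) := by
    rw [← hconj]
    exact CircleDeg1Lift.translationNumber_conj_eq Fu (Gl * Fl)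
  have hn : (n : ℝ) = 0 := by linarith
  refine ⟨F₀, G₀, hF₀c, hF₀m, hF₀s, hF₀per, hF₀lift, hG₀c, hG₀m, hG₀s, hG₀per, hG₀lift, ?_⟩
  funext x
  have := hconst x
  simp only [hh, hn] at this
  simp only [Function.comp_apply]
  linarith
end
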